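/- Let L ≥ 0 be an integer and let (α_t)_{t≥0} be any sequence of reals with 0 ≤ α_t ≤ 1 for all t. Let (Z_t)_{t≥0} be a sequence of nonnegative-integer-valued random variables on a probability space such that Z_0 = 0 almost surely and, for every t ≥ 0, conditionally on the σ-algebra generated by Z_0, …, Z_t: Z_{t+1} = Z_t + 1 with probability (1 + α_t)/4, Z_{t+1} = max(Z_t − 1, 0) with probability (1 + α_t)/4, and Z_{t+1} = Z_t with probability (1 − α_t)/2. Let T = min{t : Z_t = L} be the first hitting time of L. Then E[T] ≤ 2(L + 1)². -/

import Mathlib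

open MeasureTheory ProbabilityTheory
open scoped ENNReal

/-- One-step transition kernel of the auxiliary process `Z`: from state `a` the chain
moves to `a + 1` with probability `(1 + α)/4`, to `max(a - 1, 0)` with probability
`(1 + α)/4`, and stays at `a` with probability `(1 - α)/2` (here `a - 1` is truncated
ℕ-subtraction, so at `a = 0` the probabilities of the coinciding outcomes add up). -/
noncomputable def stepKernel (α : ℝ) (a b : ℕ) : ℝ :=
  (if b = a + 1 then (1 + α) / 4 else 0) +
  (if b = a - 1 then (1 + α) / 4 else 0) +
  (if b = a then (1 - α) / 2 else 0)

noncomputable def gE (L a : ℕ) : ℝ≥0∞ :=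
  ENNReal.ofReal (2*(L:ℝ)*((L:ℝ)+1) - 2*(a:ℝ)*((a:ℝ)+1))

lemma stepKernel_zero {α : ℝ} {a b : ℕ} (h1 : b ≠ a + 1) (h2 : b ≠ a - 1) (h3 : b ≠ a) :
    stepKernel α a b = 0 := by
  unfold stepKernel
  rw [if_neg h1, if_neg h2, if_neg h3]; ring

lemma stepKernel_nonneg {α : ℝ} (h0 : 0 ≤ α) (h1 : α ≤ 1) (a b : ℕ) :
    0 ≤ stepKernel α a b := by
  unfold stepKernel
  have : (0:ℝ) ≤ (1+α)/4 := by linarith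
  have : (0:ℝ) ≤ (1-α)/2 := by linarith
  positivity

lemma kernel_sum (L a : ℕ) (α : ℝ) (h0 : 0 ≤ α) (h1 : α ≤ 1) (ha : a < L) :
    (∑' b : ℕ, gE L b * ENNReal.ofReal (stepKernel α a b)) + 1 ≤ gE L a := by
  rcases a with _ | m
  · -- a = 0
    have hL1 : (1:ℝ) ≤ (L:ℝ) := by exact_mod_cast ha
    have hsum : (∑' b : ℕ, gE L b * ENNReal.ofReal (stepKernel α 0 b)) =
        ∑ b ∈ ({0, 1} : Finset ℕ), gE L b * ENNReal.ofReal (stepKernel α 0 b) := by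
      apply tsum_eq_sum
      intro b hb
      simp only [Finset.mem_insert, Finset.mem_singleton, not_or] at hb
      have : stepKernel α 0 b = 0 := by
        unfold stepKernel
        simp [hb.1, hb.2]
      simp [this]
    rw [hsum]
    have hk0 : stepKernel α 0 0 = (1+α)/4 + (1-α)/2 := by unfold stepKernel; norm_num
    have hk1 : stepKernel α 0 1 = (1+α)/4 := by unfold stepKernel; norm_num
    rw [Finset.sum_insert (by norm_num), Finset.sum_singleton, hk0, hk1]
    simp only [gE]
    push_cast
    have hp1 : (0:ℝ) ≤ (1+α)/4 := by linarith
    have hp2 : (0:ℝ) ≤ (1+α)/4 + (1-α)/2 := by linarith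
    have hA : (0:ℝ) ≤ 2*(L:ℝ)*((L:ℝ)+1) - 2*0*(0+1) := by nlinarith
    have hB : (0:ℝ) ≤ 2*(L:ℝ)*((L:ℝ)+1) - 2*1*(1+1) := by nlinarith
    rw [← ENNReal.ofReal_mul hA, ← ENNReal.ofReal_mul hB,
      ← ENNReal.ofReal_add (mul_nonneg hA hp2) (mul_nonneg hB hp1),
      ← ENNReal.ofReal_one,
      ← ENNReal.ofReal_add (add_nonneg (mul_nonneg hA hp2) (mul_nonneg hB hp1)) (by norm_num)]
    apply ENNReal.ofReal_le_ofReal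
    nlinarith
  · -- a = m + 1
    have hL1 : (m:ℝ) + 2 ≤ (L:ℝ) := by exact_mod_cast ha
    have hsum : (∑' b : ℕ, gE L b * ENNReal.ofReal (stepKernel α (m+1) b)) =
        ∑ b ∈ ({m, m+1, m+2} : Finset ℕ), gE L b * ENNReal.ofReal (stepKernel α (m+1) b) := by
      apply tsum_eq_sum
      intro b hb
      simp only [Finset.mem_insert, Finset.mem_singleton, not_or] at hb
      have : stepKernel α (m+1) b = 0 := by
        unfold stepKernel
        have h1' : m + 1 - 1 = m := rfl
        rw [h1', if_neg hb.2.2, if_neg hb.1, if_neg hb.2.1]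
        ring
      simp [this]
    rw [hsum]
    have hkm : stepKernel α (m+1) m = (1+α)/4 := by
      unfold stepKernel
      rw [if_neg (by omega), if_pos (by omega), if_neg (by omega)]; ring
    have hk1 : stepKernel α (m+1) (m+1) = (1-α)/2 := by
      unfold stepKernel
      rw [if_neg (by omega), if_neg (by omega), if_pos rfl]; ring
    have hk2 : stepKernel α (m+1) (m+2) = (1+α)/4 := by
      unfold stepKernel
      rw [if_pos rfl, if_neg (by omega), if_neg (by omega)]; ring
    rw [Finset.sum_insert (by simp), Finset.sum_insert (by simp), Finset.sum_singleton,
      hkm, hk1, hk2]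
    simp only [gE]
    push_cast
    have hm : (0:ℝ) ≤ (m:ℝ) := Nat.cast_nonneg m
    have hp1 : (0:ℝ) ≤ (1+α)/4 := by linarith
    have hp2 : (0:ℝ) ≤ (1-α)/2 := by linarith
    have hA : (0:ℝ) ≤ 2*(L:ℝ)*((L:ℝ)+1) - 2*(m:ℝ)*((m:ℝ)+1) := by nlinarith
    have hB : (0:ℝ) ≤ 2*(L:ℝ)*((L:ℝ)+1) - 2*((m:ℝ)+1)*((m:ℝ)+1+1) := by nlinarith
    have hC : (0:ℝ) ≤ 2*(L:ℝ)*((L:ℝ)+1) - 2*((m:ℝ)+2)*((m:ℝ)+2+1) := by nlinarith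
    rw [← ENNReal.ofReal_mul hA, ← ENNReal.ofReal_mul hB, ← ENNReal.ofReal_mul hC,
      ← ENNReal.ofReal_add (mul_nonneg hB hp2) (mul_nonneg hC hp1),
      ← ENNReal.ofReal_add (mul_nonneg hA hp1) (add_nonneg (mul_nonneg hB hp2) (mul_nonneg hC hp1)),
      ← ENNReal.ofReal_one,
      ← ENNReal.ofReal_add (add_nonneg (mul_nonneg hA hp1) (add_nonneg (mul_nonneg hB hp2) (mul_nonneg hC hp1))) (by norm_num)]
    apply ENNReal.ofReal_le_ofReal
    nlinarith

section PW
variable {Ω : Type*}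

lemma hit_eq_tsum (L : ℕ) (Z : ℕ → Ω → ℕ) (ω : Ω) :
    (⨅ (t : ℕ) (_ : Z t ω = L), (t : ℝ≥0∞)) =
      ∑' k : ℕ, Set.indicator {ω' | ∀ s ≤ k, Z s ω' ≠ L} (fun _ => (1:ℝ≥0∞)) ω := by
  by_cases h : ∃ t, Z t ω = L
  · set m := Nat.find h with hm
    have hcond : ∀ k : ℕ, (∀ s ≤ k, Z s ω ≠ L) ↔ k < Nat.find h := by
      intro k
      constructor
      · intro hk
        by_contra hlt
        push_neg at hlt
        exact hk (Nat.find h) hlt (Nat.find_spec h)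
      · intro hk s hs
        exact Nat.find_min h (lt_of_le_of_lt hs hk)
    have hRHS : ∀ k : ℕ, Set.indicator {ω' | ∀ s ≤ k, Z s ω' ≠ L} (fun _ => (1:ℝ≥0∞)) ω
        = if k < Nat.find h then 1 else 0 := by
      intro k
      rw [Set.indicator_apply]
      congr 1
      simp only [Set.mem_setOf_eq, eq_iff_iff]
      exact hcond k
    rw [tsum_congr hRHS]
    have : (∑' k : ℕ, if k < Nat.find h then (1:ℝ≥0∞) else 0) = ∑ k ∈ Finset.range (Nat.find h), (1:ℝ≥0∞) := by
      rw [tsum_eq_sum (s := Finset.range (Nat.find h))]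
      · exact Finset.sum_congr rfl fun k hk => if_pos (Finset.mem_range.mp hk)
      · intro k hk
        exact if_neg (by simpa using hk)
    rw [this, Finset.sum_const, Finset.card_range, nsmul_eq_mul, mul_one]
    apply le_antisymm
    · exact le_trans (iInf_le _ (Nat.find h)) (iInf_le _ (Nat.find_spec h))
    · exact le_iInf₂ fun t ht => Nat.cast_le.mpr (Nat.find_min' h ht)
  · push_neg at h
    have hL : ∀ t, (⨅ (_ : Z t ω = L), (t : ℝ≥0∞)) = ⊤ := fun t => by simp [h t]
    rw [iInf_congr hL, iInf_top]
    have : ∀ k : ℕ, Set.indicator {ω' | ∀ s ≤ k, Z s ω' ≠ L} (fun _ => (1:ℝ≥0∞)) ω = 1 := by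
      intro k
      rw [Set.indicator_apply, if_pos]
      intro s _
      exact h s
    rw [tsum_congr this]
    exact (ENNReal.tsum_const_eq_top_of_ne_zero one_ne_zero).symm

end PW

/-- extension of finite trajectory -/
def extTraj (n : ℕ) (v : Fin (n+1) → ℕ) (s : ℕ) : ℕ := if h : s < n+1 then v ⟨s, h⟩ else 0

lemma extTraj_eq {n : ℕ} (v : Fin (n+1) → ℕ) {s : ℕ} (hs : s ≤ n) :
    extTraj n v s = v ⟨s, Nat.lt_succ_of_le hs⟩ := dif_pos _

section Cyl
variable {Ω : Type*} [MeasurableSpace Ω] (Z : ℕ → Ω → ℕ)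

def cyl (n : ℕ) (v : Fin (n+1) → ℕ) : Set Ω := {ω | ∀ s ≤ n, Z s ω = extTraj n v s}

lemma cyl_meas (hZ : ∀ t, Measurable (Z t)) (n : ℕ) (v : Fin (n+1) → ℕ) :
    MeasurableSet (cyl Z n v) := by
  have : cyl Z n v = ⋂ s ∈ Set.Iic n, (Z s)⁻¹' {extTraj n v s} := by
    ext ω; simp [cyl, Set.mem_iInter]
  rw [this]
  exact MeasurableSet.biInter (Set.to_countable _) fun s _ =>
    (hZ s) (measurableSet_singleton _)

lemma cyl_mem_iff {n : ℕ} {v : Fin (n+1) → ℕ} {ω : Ω} :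
    ω ∈ cyl Z n v ↔ ∀ i : Fin (n+1), Z i ω = v i := by
  constructor
  · intro h i
    have := h i (Nat.lt_succ_iff.mp i.2)
    rwa [extTraj_eq v (Nat.lt_succ_iff.mp i.2)] at this
  · intro h s hs
    rw [extTraj_eq v hs]
    exact h ⟨s, Nat.lt_succ_of_le hs⟩

lemma cyl_disj (n : ℕ) : Pairwise (Function.onFun Disjoint fun v : Fin (n+1) → ℕ => cyl Z n v) := by
  intro v w hvw
  rw [Function.onFun, Set.disjoint_left]
  intro ω hv hw
  apply hvw
  funext i
  rw [← (cyl_mem_iff Z).mp hv i, ← (cyl_mem_iff Z).mp hw i]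

lemma cyl_union (L n : ℕ) :
    (⋃ v : {v : Fin (n+1) → ℕ // ∀ i, v i ≠ L}, cyl Z n v.1) = {ω | ∀ s ≤ n, Z s ω ≠ L} := by
  ext ω
  simp only [Set.mem_iUnion, Set.mem_setOf_eq]
  constructor
  · rintro ⟨v, hv⟩ s hs
    rw [(cyl_mem_iff Z).mp hv ⟨s, Nat.lt_succ_of_le hs⟩]
    exact v.2 _
  · intro h
    refine ⟨⟨fun i => Z i ω, fun i => h i (Nat.lt_succ_iff.mp i.2)⟩, ?_⟩
    exact (cyl_mem_iff Z).mpr fun i => rfl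

lemma cyl_union_all (n : ℕ) : (⋃ v : Fin (n+1) → ℕ, cyl Z n v) = Set.univ := by
  ext ω
  simp only [Set.mem_iUnion, Set.mem_univ, iff_true]
  exact ⟨fun i => Z i ω, (cyl_mem_iff Z).mpr fun i => rfl⟩

end Cyl

/-- Let `L ≥ 0` and let `(α_t)` be reals in `[0,1]`. Let `(Z_t)` be
ℕ-valued random variables with `Z_0 = 0` a.s. such that, conditionally on the history
`Z_0 = z_0, …, Z_t = z_t`, the next state `Z_{t+1}` equals `z_t + 1` with probability
`(1 + α_t)/4`, `max(z_t - 1, 0)` with probability `(1 + α_t)/4`, and `z_t` with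
probability `(1 - α_t)/2`. Then the first hitting time `T = min{t : Z_t = L}` satisfies
`E[T] ≤ 2(L + 1)²` (in particular `T` is a.s. finite). -/
theorem hitting_time_expectation_le
    {Ω : Type*} [MeasurableSpace Ω] (μ : Measure Ω) [IsProbabilityMeasure μ]
    (L : ℕ) (α : ℕ → ℝ) (hα : ∀ t, 0 ≤ α t ∧ α t ≤ 1)
    (Z : ℕ → Ω → ℕ) (hZmeas : ∀ t, Measurable (Z t))
    (hZ0 : ∀ᵐ ω ∂μ, Z 0 ω = 0)
    (hstep : ∀ (t : ℕ) (z : ℕ → ℕ),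
      μ {ω | ∀ s ≤ t, Z s ω = z s} ≠ 0 →
      ∀ b : ℕ,
        μ[|{ω | ∀ s ≤ t, Z s ω = z s}] {ω | Z (t + 1) ω = b} =
          ENNReal.ofReal (stepKernel (α t) (z t) b)) :
    ∫⁻ ω, (⨅ (t : ℕ) (_ : Z t ω = L), (t : ℝ≥0∞)) ∂μ ≤
      ENNReal.ofReal (2 * ((L : ℝ) + 1) ^ 2) := by
  by_cases hL0 : L = 0
  · subst hL0
    have h0 : ∀ᵐ ω ∂μ, (⨅ (t : ℕ) (_ : Z t ω = 0), (t : ℝ≥0∞)) = 0 := by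
      filter_upwards [hZ0] with ω h
      exact le_antisymm (le_trans (iInf_le _ 0) (le_trans (iInf_le _ h) (by simp))) zero_le
    rw [lintegral_congr_ae h0, lintegral_zero]
    exact zero_le
  have hLpos : 0 < L := Nat.pos_of_ne_zero hL0
  -- basic notation
  set B : ℕ → Set Ω := fun n => {ω | ∀ s ≤ n, Z s ω ≠ L} with hB
  have hBmeas : ∀ n, MeasurableSet (B n) := by
    intro n
    have : B n = ⋂ s ∈ Set.Iic n, (Z s)⁻¹' {L}ᶜ := by
      ext ω; simp [hB]
    rw [this]
    exact MeasurableSet.biInter (Set.to_countable _) fun s _ =>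
      (hZmeas s) (measurableSet_singleton _).compl
  -- hstep applies to cylinders
  have hstep' : ∀ (n : ℕ) (v : Fin (n+1) → ℕ), μ (cyl Z n v) ≠ 0 → ∀ b : ℕ,
      μ[|cyl Z n v] {ω | Z (n + 1) ω = b} =
        ENNReal.ofReal (stepKernel (α n) (extTraj n v n) b) := by
    intro n v hne b
    exact hstep n (extTraj n v) hne b
  -- zero transition probabilities kill mass
  have hzero : ∀ (n : ℕ) (v : Fin (n+1) → ℕ) (b : ℕ),
      stepKernel (α n) (extTraj n v n) b = 0 →
      μ (cyl Z n v ∩ {ω | Z (n+1) ω = b}) = 0 := by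
    intro n v b hk
    by_cases hne : μ (cyl Z n v) = 0
    · exact measure_mono_null Set.inter_subset_left hne
    · have h1 := hstep' n v hne b
      rw [hk, ENNReal.ofReal_zero, cond_apply (cyl_meas Z hZmeas n v)] at h1
      rcases mul_eq_zero.mp h1 with h | h
      · exact absurd (ENNReal.inv_eq_zero.mp h) (measure_ne_top μ _)
      · exact h
  -- the a.e. support event
  have hstepAE : ∀ t : ℕ, μ {ω | ¬(Z (t+1) ω = Z t ω + 1 ∨ Z (t+1) ω = Z t ω - 1 ∨
      Z (t+1) ω = Z t ω)} = 0 := by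
    intro t
    set bad := {ω | ¬(Z (t+1) ω = Z t ω + 1 ∨ Z (t+1) ω = Z t ω - 1 ∨ Z (t+1) ω = Z t ω)}
    have hcover : bad ⊆ ⋃ (v : Fin (t+1) → ℕ) (b : ℕ),
        (cyl Z t v ∩ {ω | Z (t+1) ω = b}) ∩ bad := by
      intro ω hω
      have hu : ω ∈ ⋃ v : Fin (t+1) → ℕ, cyl Z t v := by rw [cyl_union_all]; trivial
      obtain ⟨v, hv⟩ := Set.mem_iUnion.mp hu
      exact Set.mem_iUnion.mpr ⟨v, Set.mem_iUnion.mpr ⟨Z (t+1) ω, ⟨⟨hv, rfl⟩, hω⟩⟩⟩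
    refine measure_mono_null hcover (measure_iUnion_null fun v => measure_iUnion_null fun b => ?_)
    by_cases hgood : b = extTraj t v t + 1 ∨ b = extTraj t v t - 1 ∨ b = extTraj t v t
    · -- the intersection with bad is empty
      have : (cyl Z t v ∩ {ω | Z (t+1) ω = b}) ∩ bad = ∅ := by
        ext ω
        simp only [Set.mem_inter_iff, Set.mem_setOf_eq, Set.mem_empty_iff_false, iff_false,
          not_and, and_imp]
        intro hc hzb hbad
        have hzt : Z t ω = extTraj t v t := hc t le_rfl
        apply hbad
        rw [hzb, hzt]
        exact hgood
      rw [this]; exact measure_empty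
    · push_neg at hgood
      refine measure_mono_null Set.inter_subset_left ?_
      exact hzero t v b (stepKernel_zero hgood.1 hgood.2.1 hgood.2.2)
  have hEc : μ ({ω | Z 0 ω = 0} ∩ ⋂ t : ℕ, {ω | Z (t+1) ω = Z t ω + 1 ∨
      Z (t+1) ω = Z t ω - 1 ∨ Z (t+1) ω = Z t ω})ᶜ = 0 := by
    rw [Set.compl_inter, Set.compl_iInter]
    refine measure_union_null ?_ (measure_iUnion_null fun t => hstepAE t)
    exact ae_iff.mp hZ0
  set E := {ω | Z 0 ω = 0} ∩ ⋂ t : ℕ, {ω | Z (t+1) ω = Z t ω + 1 ∨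
      Z (t+1) ω = Z t ω - 1 ∨ Z (t+1) ω = Z t ω} with hE
  -- reachability: cylinders of positive measure avoiding L stay below L
  have hreach : ∀ (n : ℕ) (v : Fin (n+1) → ℕ), (∀ i, v i ≠ L) → μ (cyl Z n v) ≠ 0 →
      extTraj n v n < L := by
    intro n v hv hne
    have hnonempty : (cyl Z n v ∩ E).Nonempty := by
      rw [Set.nonempty_iff_ne_empty]
      intro hempty
      apply hne
      have : cyl Z n v ⊆ Eᶜ := by
        intro ω hω
        by_contra hcon
        exact Set.eq_empty_iff_forall_notMem.mp hempty ω ⟨hω, not_not.mp hcon⟩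
      exact measure_mono_null this hEc
    obtain ⟨ω, hωc, hω0, hωs⟩ := hnonempty
    simp only [Set.mem_iInter, Set.mem_setOf_eq] at hωs hω0
    have key : ∀ s ≤ n, Z s ω < L := by
      intro s
      induction s with
      | zero => intro _; rw [hω0]; exact hLpos
      | succ k ih =>
        intro hk
        have hik := ih (le_of_lt (Nat.lt_of_succ_le hk))
        have hstepk := hωs k
        have hne' : Z (k+1) ω ≠ L := by
          rw [(cyl_mem_iff Z).mp hωc ⟨k+1, Nat.lt_succ_of_le hk⟩]
          exact hv _
        omega
    have hlt := key n le_rfl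
    have heq : Z n ω = extTraj n v n := hωc n le_rfl
    rwa [heq] at hlt
  -- per-cylinder drift estimate
  have hdrift : ∀ (n : ℕ) (v : Fin (n+1) → ℕ), (∀ i, v i ≠ L) →
      (∫⁻ ω in cyl Z n v, gE L (Z (n+1) ω) ∂μ) + μ (cyl Z n v) ≤
        gE L (extTraj n v n) * μ (cyl Z n v) := by
    intro n v hv
    by_cases hne : μ (cyl Z n v) = 0
    · rw [Measure.restrict_eq_zero.mpr hne, lintegral_zero_measure, hne]
      simp
    · have ha := hreach n v hv hne
      have hCfin : μ (cyl Z n v) ≠ ⊤ := measure_ne_top μ _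
      have hint : ∫⁻ ω, gE L (Z (n+1) ω) ∂(μ[|cyl Z n v]) =
          ∑' b : ℕ, gE L b * ENNReal.ofReal (stepKernel (α n) (extTraj n v n) b) := by
        rw [← lintegral_map measurable_from_top (hZmeas (n+1)), lintegral_countable']
        apply tsum_congr
        intro b
        congr 1
        rw [Measure.map_apply (hZmeas (n+1)) (measurableSet_singleton b)]
        have hpre : (Z (n+1))⁻¹' {b} = {ω | Z (n + 1) ω = b} := rfl
        rw [hpre]
        exact hstep' n v hne b
      have hcond : ∫⁻ ω, gE L (Z (n+1) ω) ∂(μ[|cyl Z n v]) =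
          (μ (cyl Z n v))⁻¹ * ∫⁻ ω in cyl Z n v, gE L (Z (n+1) ω) ∂μ := by
        rw [show (μ[|cyl Z n v]) = (μ (cyl Z n v))⁻¹ • μ.restrict (cyl Z n v) from rfl,
          lintegral_smul_measure, smul_eq_mul]
      have hint2 : ∫⁻ ω in cyl Z n v, gE L (Z (n+1) ω) ∂μ =
          μ (cyl Z n v) * ∑' b : ℕ, gE L b * ENNReal.ofReal (stepKernel (α n) (extTraj n v n) b) := by
        rw [← hint, hcond, ← mul_assoc, ENNReal.mul_inv_cancel hne hCfin, one_mul]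
      rw [hint2]
      calc μ (cyl Z n v) * (∑' b : ℕ, gE L b * ENNReal.ofReal (stepKernel (α n) (extTraj n v n) b))
            + μ (cyl Z n v)
          = μ (cyl Z n v) * ((∑' b : ℕ, gE L b * ENNReal.ofReal (stepKernel (α n) (extTraj n v n) b)) + 1) := by
            rw [mul_add, mul_one]
        _ ≤ μ (cyl Z n v) * gE L (extTraj n v n) :=
            mul_le_mul_right (kernel_sum L _ (α n) (hα n).1 (hα n).2 ha) _
        _ = gE L (extTraj n v n) * μ (cyl Z n v) := mul_comm _ _
  -- decomposition of B n
  have hdecomp : ∀ (n : ℕ) (f : Ω → ℝ≥0∞),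
      ∫⁻ ω in B n, f ω ∂μ = ∑' v : {v : Fin (n+1) → ℕ // ∀ i, v i ≠ L},
        ∫⁻ ω in cyl Z n v.1, f ω ∂μ := by
    intro n f
    have hd : Pairwise (Function.onFun Disjoint fun v : {v : Fin (n+1) → ℕ // ∀ i, v i ≠ L} => cyl Z n v.1) :=
      fun v w hvw => cyl_disj Z n (fun h => hvw (Subtype.ext h))
    have key := lintegral_iUnion (μ := μ)
      (s := fun v : {v : Fin (n+1) → ℕ // ∀ i, v i ≠ L} => cyl Z n v.1)
      (fun v => cyl_meas Z hZmeas n v.1) hd f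
    rw [cyl_union Z L n] at key
    exact key
  have hmeasdecomp : ∀ n : ℕ, μ (B n) = ∑' v : {v : Fin (n+1) → ℕ // ∀ i, v i ≠ L},
      μ (cyl Z n v.1) := by
    intro n
    have hd : Pairwise (Function.onFun Disjoint fun v : {v : Fin (n+1) → ℕ // ∀ i, v i ≠ L} => cyl Z n v.1) :=
      fun v w hvw => cyl_disj Z n (fun h => hvw (Subtype.ext h))
    have key := measure_iUnion (μ := μ)
      (f := fun v : {v : Fin (n+1) → ℕ // ∀ i, v i ≠ L} => cyl Z n v.1)
      hd (fun v => cyl_meas Z hZmeas n v.1)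
    rw [cyl_union Z L n] at key
    exact key
  -- the supermartingale inequality
  set u : ℕ → ℝ≥0∞ := fun n => ∫⁻ ω in B n, gE L (Z n ω) ∂μ with hu
  have hmain : ∀ n : ℕ, u (n+1) + μ (B (n+1)) ≤ u n := by
    intro n
    have hsub : B (n+1) ⊆ B n := fun ω h s hs => h s (le_trans hs (Nat.le_succ n))
    have h1 : u (n+1) ≤ ∫⁻ ω in B n, gE L (Z (n+1) ω) ∂μ :=
      lintegral_mono_set hsub
    have h2 : (∫⁻ ω in B n, gE L (Z (n+1) ω) ∂μ) + μ (B n) ≤ u n := by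
      rw [hdecomp n (fun ω => gE L (Z (n+1) ω)), hmeasdecomp n, ← ENNReal.tsum_add]
      have hun : u n = ∑' v : {v : Fin (n+1) → ℕ // ∀ i, v i ≠ L},
          gE L (extTraj n v.1 n) * μ (cyl Z n v.1) := by
        rw [hu]
        simp only []
        rw [hdecomp n (fun ω => gE L (Z n ω))]
        apply tsum_congr
        intro v
        rw [setLIntegral_congr_fun (cyl_meas Z hZmeas n v.1)
          (fun ω (hω : ω ∈ cyl Z n v.1) => by rw [hω n le_rfl]),
          setLIntegral_const]
      rw [hun]
      exact ENNReal.tsum_le_tsum fun v => hdrift n v.1 v.2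
    calc u (n+1) + μ (B (n+1)) ≤ (∫⁻ ω in B n, gE L (Z (n+1) ω) ∂μ) + μ (B n) :=
          add_le_add h1 (measure_mono hsub)
      _ ≤ u n := h2
  -- partial sums
  have hpartial : ∀ n : ℕ, u n + ∑ k ∈ Finset.range n, μ (B (k+1)) ≤ u 0 := by
    intro n
    induction n with
    | zero => simp
    | succ m ih =>
      calc u (m+1) + ∑ k ∈ Finset.range (m+1), μ (B (k+1))
          = (u (m+1) + μ (B (m+1))) + ∑ k ∈ Finset.range m, μ (B (k+1)) := by
            rw [Finset.sum_range_succ, ← add_assoc, add_right_comm]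
        _ ≤ u m + ∑ k ∈ Finset.range m, μ (B (k+1)) := add_le_add_left (hmain m) _
        _ ≤ u 0 := ih
  have htsum : (∑' k : ℕ, μ (B k)) ≤ μ (B 0) + u 0 := by
    rw [ENNReal.tsum_eq_iSup_nat]
    refine iSup_le fun n => ?_
    rcases n with _ | m
    · simp
    · rw [Finset.sum_range_succ']
      have h1 : (∑ k ∈ Finset.range m, μ (B (k+1))) ≤ u 0 :=
        le_trans le_add_self (hpartial m)
      calc (∑ k ∈ Finset.range m, μ (B (k+1))) + μ (B 0) ≤ u 0 + μ (B 0) :=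
            add_le_add_left h1 _
        _ = μ (B 0) + u 0 := add_comm _ _
  have hu0 : u 0 ≤ gE L 0 := by
    calc u 0 ≤ ∫⁻ ω, gE L (Z 0 ω) ∂μ := setLIntegral_le_lintegral _ _
      _ = ∫⁻ _, gE L 0 ∂μ := lintegral_congr_ae (hZ0.mono fun ω h => by simp [h])
      _ = gE L 0 := by rw [lintegral_const, measure_univ, mul_one]
  have hb0 : μ (B 0) ≤ 1 := prob_le_one
  -- rewrite the integral of the hitting time
  have hTint : ∫⁻ ω, (⨅ (t : ℕ) (_ : Z t ω = L), (t : ℝ≥0∞)) ∂μ = ∑' k : ℕ, μ (B k) := by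
    rw [lintegral_congr (hit_eq_tsum L Z), lintegral_tsum (fun k =>
      (measurable_const.indicator (hBmeas k)).aemeasurable)]
    exact tsum_congr fun k => lintegral_indicator_one (hBmeas k)
  rw [hTint]
  have hfinal : μ (B 0) + u 0 ≤ ENNReal.ofReal (2 * ((L : ℝ) + 1) ^ 2) := by
    have hL0' : (0:ℝ) ≤ (L:ℝ) := Nat.cast_nonneg L
    have hg0 : gE L 0 = ENNReal.ofReal (2*(L:ℝ)*((L:ℝ)+1)) := by
      simp [gE]
    calc μ (B 0) + u 0 ≤ 1 + gE L 0 := add_le_add hb0 hu0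
      _ = ENNReal.ofReal (1 + 2*(L:ℝ)*((L:ℝ)+1)) := by
          rw [hg0, ENNReal.ofReal_add (by norm_num) (by nlinarith), ENNReal.ofReal_one]
      _ ≤ ENNReal.ofReal (2 * ((L : ℝ) + 1) ^ 2) := ENNReal.ofReal_le_ofReal (by nlinarith)
  exact le_trans htsum hfinal
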